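/- Let ψ: ℝ → ℂ be a Schwartz function with ∫_ℝ ψ(x) dx ≠ 0, and for λ ≥ 2 set ψ_λ(x) := λ ψ(λ x). Then there is a constant c = c(ψ) > 0 such that ‖ψ_λ‖²_{H^{-1/2}(ℝ)} ≥ c log λ for all λ ≥ 2. -/

import Mathlib

set_option maxHeartbeats 1000000


open MeasureTheory
open scoped FourierTransform

open Real in
lemma fourier_comp_mul_aux (f : ℝ → ℂ) {lam : ℝ} (hl : 0 < lam) (ξ : ℝ) :
    𝓕 (fun x => (lam : ℂ) * f (lam * x)) ξ = 𝓕 f (ξ / lam) := by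
  have hne : lam ≠ 0 := ne_of_gt hl
  rw [Real.fourier_real_eq_integral_exp_smul,
    Real.fourier_real_eq_integral_exp_smul]
  have key : ∀ x : ℝ, (Complex.exp (↑(-2 * π * x * ξ) * Complex.I) • ((lam : ℂ) * f (lam * x)))
      = (lam : ℂ) * ((fun y => Complex.exp (↑(-2 * π * y * (ξ / lam)) * Complex.I) • f y)
          (lam * x)) := by
    intro x
    have h2 : -2 * π * (lam * x) * (ξ / lam) = -2 * π * x * ξ := by field_simp
    simp only [h2, smul_eq_mul]
    ring
  simp_rw [key]
  rw [MeasureTheory.integral_const_mul,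
    MeasureTheory.Measure.integral_comp_mul_left
      (fun y => Complex.exp (↑(-2 * π * y * (ξ / lam)) * Complex.I) • f y) lam,
    abs_of_pos (inv_pos.mpr hl)]
  rw [Complex.real_smul, ← mul_assoc]
  push_cast
  rw [mul_inv_cancel₀ (by exact_mod_cast hne), one_mul]

lemma fourierAtZero_aux (f : ℝ → ℂ) : 𝓕 f 0 = ∫ x, f x := by
  rw [Real.fourier_real_eq]; simp

lemma sqrt_le_aux (ξ : ℝ) (hξ : 0 ≤ ξ) : (1 + ξ ^ 2) ^ ((1/2) : ℝ) ≤ 1 + ξ := by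
  rw [show ((1:ℝ)/2) = (2:ℝ)⁻¹ by norm_num,
    Real.rpow_inv_le_iff_of_pos (by positivity) (by positivity) (by norm_num)]
  rw [show ((2:ℝ)) = ((2:ℕ):ℝ) by norm_num, Real.rpow_natCast]
  nlinarith [sq_nonneg ξ, hξ]

lemma rpow_ge_aux (ξ : ℝ) (hξ : 0 ≤ ξ) : (1 + ξ)⁻¹ ≤ (1 + ξ ^ 2) ^ (-(1/2) : ℝ) := by
  rw [Real.rpow_neg (by positivity)]
  exact inv_anti₀ (by positivity) (sqrt_le_aux ξ hξ)

lemma log_integral_aux (a b : ℝ) (ha : (0:ℝ) < a) (hb : a ≤ b) :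
    ∫ x in Set.Icc a b, (1 + x)⁻¹ = Real.log (1 + b) - Real.log (1 + a) := by
  rw [MeasureTheory.integral_Icc_eq_integral_Ioc, ← intervalIntegral.integral_of_le hb,
    intervalIntegral.integral_comp_add_left (a := a) (b := b) (fun u : ℝ => u⁻¹) 1,
    ← Real.log_div (by intro hh; nlinarith) (by intro hh; nlinarith)]
  simp_rw [← one_div]
  rw [integral_one_div (by
    intro hmem; rw [Set.uIcc_of_le (by linarith)] at hmem
    rcases hmem with ⟨h1, h2⟩; linarith)]

theorem nonzero_mean_scaling_lower_bound (ψ : SchwartzMap ℝ ℂ)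
    (h : (∫ x : ℝ, ψ x) ≠ 0) :
    ∃ c : ℝ, 0 < c ∧ ∀ lam : ℝ, 2 ≤ lam →
      c * Real.log lam ≤
        ∫ ξ : ℝ, (1 + ξ ^ 2) ^ (-(1/2) : ℝ) *
          ‖𝓕 (fun x => (lam : ℂ) * ψ (lam * x)) ξ‖ ^ 2 := by
  classical
  set Φ : SchwartzMap ℝ ℂ := SchwartzMap.fourierTransformCLM ℂ ψ with hΦdef
  have hΦcoe : (Φ : ℝ → ℂ) = 𝓕 (⇑ψ) := by
    rw [hΦdef, SchwartzMap.fourierTransformCLM_apply, SchwartzMap.fourier_coe]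
  have hΦ0 : Φ 0 = ∫ x, ψ x := by
    rw [show Φ 0 = (Φ : ℝ → ℂ) 0 from rfl, hΦcoe, fourierAtZero_aux]
  set ε : ℝ := ‖(∫ x, ψ x : ℂ)‖ / 2 with hεdef
  have hε : 0 < ε := by
    have : 0 < ‖(∫ x, ψ x : ℂ)‖ := norm_pos_iff.mpr h
    positivity
  -- continuity at 0 gives δ
  obtain ⟨δ0, hδ0, hδ0prop⟩ := Metric.continuousAt_iff.mp (Φ.continuous.continuousAt (x := 0)) ε hε
  set δ : ℝ := δ0 / 2 with hδdef
  have hδ : 0 < δ := by positivity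
  have hδbound : ∀ u : ℝ, |u| ≤ δ → ε ≤ ‖Φ u‖ := by
    intro u hu
    have hdist : dist u 0 < δ0 := by
      rw [Real.dist_eq, sub_zero]; linarith
    have h1 : dist (Φ u) (Φ 0) < ε := hδ0prop hdist
    have h2 : ‖Φ 0‖ - ‖Φ u‖ ≤ dist (Φ u) (Φ 0) := by
      rw [dist_eq_norm]
      calc ‖Φ 0‖ - ‖Φ u‖ ≤ ‖Φ 0 - Φ u‖ := norm_sub_norm_le _ _
        _ = ‖Φ u - Φ 0‖ := norm_sub_rev _ _
    have h3 : ‖Φ 0‖ = 2 * ε := by rw [hΦ0, hεdef]; ring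
    linarith
  -- constants
  set Λ : ℝ := max 2 (((1 + δ) / δ) ^ 2) with hΛdef
  have hΛ2 : (2:ℝ) ≤ Λ := le_max_left _ _
  have hΛ1 : (1:ℝ) < Λ := by linarith
  set r : ℝ := (1 + 2 * δ) / (1 + δ) with hrdef
  have hr1 : 1 < r := by
    rw [hrdef, lt_div_iff₀ (by positivity)]; linarith
  have hlogΛ : 0 < Real.log Λ := Real.log_pos hΛ1
  have hlogr : 0 < Real.log r := Real.log_pos hr1
  set c₂ : ℝ := min (1/2) (Real.log r / Real.log Λ) with hc₂def
  have hc₂ : 0 < c₂ := lt_min (by norm_num) (by positivity)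
  refine ⟨ε ^ 2 * c₂, by positivity, ?_⟩
  intro lam hlam
  have hlam0 : (0:ℝ) < lam := by linarith
  have hFeq : ∀ ξ : ℝ, 𝓕 (fun x => (lam : ℂ) * ψ (lam * x)) ξ = Φ (ξ / lam) := by
    intro ξ
    rw [fourier_comp_mul_aux (⇑ψ) hlam0 ξ, show Φ (ξ/lam) = (Φ : ℝ → ℂ) (ξ/lam) from rfl, hΦcoe]
  simp_rw [hFeq]
  set g : ℝ → ℝ := fun ξ => (1 + ξ ^ 2) ^ (-(1/2) : ℝ) * ‖Φ (ξ / lam)‖ ^ 2 with hgdef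
  set M : ℝ := SchwartzMap.seminorm ℝ 0 0 Φ with hMdef
  have hM : ∀ x : ℝ, ‖Φ x‖ ≤ M := fun x => SchwartzMap.norm_le_seminorm ℝ Φ x
  have hM0 : 0 ≤ M := le_trans (norm_nonneg _) (hM 0)
  have hcont : Continuous g := by
    apply Continuous.mul
    · exact Continuous.rpow_const (by continuity) (fun x => Or.inl (by positivity))
    · exact ((Φ.continuous.comp (continuous_id.div_const lam)).norm.pow 2)
  have hint1 : Integrable (fun ξ : ℝ => Φ (ξ / lam)) := by
    have := Φ.integrable.comp_mul_left' (inv_ne_zero (ne_of_gt hlam0))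
    simpa [div_eq_mul_inv, mul_comm] using this
  have hg_int : Integrable g := by
    refine Integrable.mono' ((hint1.norm.const_mul M)) hcont.aestronglyMeasurable ?_
    filter_upwards with ξ
    have h1 : (1 + ξ ^ 2) ^ (-(1/2) : ℝ) ≤ 1 :=
      Real.rpow_le_one_of_one_le_of_nonpos (by nlinarith [sq_nonneg ξ]) (by norm_num)
    have h2 : ‖Φ (ξ / lam)‖ ^ 2 ≤ M * ‖Φ (ξ / lam)‖ := by
      rw [sq]
      exact mul_le_mul_of_nonneg_right (hM _) (norm_nonneg _)
    have h3 : 0 ≤ g ξ := by rw [hgdef]; positivity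
    rw [Real.norm_of_nonneg h3, hgdef]
    calc (1 + ξ ^ 2) ^ (-(1/2) : ℝ) * ‖Φ (ξ / lam)‖ ^ 2
        ≤ 1 * (M * ‖Φ (ξ / lam)‖) :=
          mul_le_mul h1 h2 (by positivity) (by norm_num)
      _ = M * ‖Φ (ξ / lam)‖ := one_mul _
  have hg_nonneg : ∀ ξ, 0 ≤ g ξ := fun ξ => by rw [hgdef]; positivity
  have hdlam : δ ≤ δ * lam := le_mul_of_one_le_right hδ.le (by linarith)
  -- step A
  have stepA : ∫ ξ in Set.Icc δ (δ * lam), g ξ ≤ ∫ ξ, g ξ :=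
    setIntegral_le_integral hg_int (ae_of_all _ hg_nonneg)
  -- step B
  have stepB : ∫ ξ in Set.Icc δ (δ * lam), ε ^ 2 * (1 + ξ)⁻¹
      ≤ ∫ ξ in Set.Icc δ (δ * lam), g ξ := by
    apply setIntegral_mono_on
    · apply ContinuousOn.integrableOn_Icc
      apply ContinuousOn.mul continuousOn_const
      apply ContinuousOn.inv₀ (by fun_prop)
      intro x hx
      have := hx.1
      intro hcon; nlinarith
    · exact hg_int.integrableOn
    · exact measurableSet_Icc
    · intro ξ hξ
      obtain ⟨hξ1, hξ2⟩ := hξ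
      have hξpos : 0 < ξ := lt_of_lt_of_le hδ hξ1
      have h1 : (1 + ξ)⁻¹ ≤ (1 + ξ ^ 2) ^ (-(1/2) : ℝ) := rpow_ge_aux ξ hξpos.le
      have habs : |ξ / lam| ≤ δ := by
        rw [abs_of_nonneg (by positivity)]
        rw [div_le_iff₀ hlam0]
        linarith [hξ2]
      have h2 : ε ≤ ‖Φ (ξ / lam)‖ := hδbound _ habs
      have h2' : ε ^ 2 ≤ ‖Φ (ξ / lam)‖ ^ 2 := by nlinarith
      rw [hgdef, mul_comm (ε ^ 2)]
      exact mul_le_mul h1 h2' (by positivity) (by positivity)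
  -- step C
  have stepC : ∫ ξ in Set.Icc δ (δ * lam), ε ^ 2 * (1 + ξ)⁻¹
      = ε ^ 2 * (Real.log (1 + δ * lam) - Real.log (1 + δ)) := by
    rw [MeasureTheory.integral_const_mul, log_integral_aux δ (δ * lam) hδ hdlam]
  -- step D : key log inequality
  have hlogratio : Real.log (1 + δ * lam) - Real.log (1 + δ)
      = Real.log ((1 + δ * lam) / (1 + δ)) := by
    rw [Real.log_div (by intro hh; nlinarith) (by intro hh; nlinarith)]
  have stepD : c₂ * Real.log lam ≤ Real.log (1 + δ * lam) - Real.log (1 + δ) := by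
    rw [hlogratio]
    have hloglam : 0 ≤ Real.log lam := Real.log_nonneg (by linarith)
    rcases le_or_gt Λ lam with hcase | hcase
    · -- large λ
      have hlam_ge : ((1 + δ) / δ) ^ 2 ≤ lam := le_trans (le_max_right _ _) hcase
      have hs : (1 + δ) / δ ≤ Real.sqrt lam := by
        rw [show (1 + δ) / δ = Real.sqrt (((1 + δ) / δ) ^ 2) from
          (Real.sqrt_sq (by positivity)).symm]
        exact Real.sqrt_le_sqrt hlam_ge
      have hssq : Real.sqrt lam ^ 2 = lam := Real.sq_sqrt hlam0.le
      have hs0 : 0 < Real.sqrt lam := Real.sqrt_pos.mpr hlam0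
      have hδs : 1 + δ ≤ δ * Real.sqrt lam := by
        rw [div_le_iff₀ hδ] at hs; linarith
      have hratio : Real.sqrt lam ≤ (1 + δ * lam) / (1 + δ) := by
        rw [le_div_iff₀ (by positivity)]
        nlinarith
      calc c₂ * Real.log lam ≤ (1/2) * Real.log lam :=
            mul_le_mul_of_nonneg_right (min_le_left _ _) hloglam
        _ = Real.log (Real.sqrt lam) := by rw [Real.log_sqrt hlam0.le]; ring
        _ ≤ Real.log ((1 + δ * lam) / (1 + δ)) := Real.log_le_log hs0 hratio
    · -- small λ
      have hloglam_le : Real.log lam ≤ Real.log Λ :=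
        Real.log_le_log hlam0 hcase.le
      have hrle : r ≤ (1 + δ * lam) / (1 + δ) := by
        rw [hrdef]
        apply div_le_div_of_nonneg_right ?_ (by positivity)
        · nlinarith
      calc c₂ * Real.log lam ≤ (Real.log r / Real.log Λ) * Real.log lam :=
            mul_le_mul_of_nonneg_right (min_le_right _ _) hloglam
        _ ≤ (Real.log r / Real.log Λ) * Real.log Λ :=
            mul_le_mul_of_nonneg_left hloglam_le (by positivity)
        _ = Real.log r := div_mul_cancel₀ _ (ne_of_gt hlogΛ)
        _ ≤ Real.log ((1 + δ * lam) / (1 + δ)) :=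
            Real.log_le_log (by positivity) hrle
  calc ε ^ 2 * c₂ * Real.log lam = ε ^ 2 * (c₂ * Real.log lam) := by ring
    _ ≤ ε ^ 2 * (Real.log (1 + δ * lam) - Real.log (1 + δ)) :=
        mul_le_mul_of_nonneg_left stepD (by positivity)
    _ = ∫ ξ in Set.Icc δ (δ * lam), ε ^ 2 * (1 + ξ)⁻¹ := stepC.symm
    _ ≤ ∫ ξ in Set.Icc δ (δ * lam), g ξ := stepB
    _ ≤ ∫ ξ, g ξ := stepA
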